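/- Fix k ∈ ℤ and let a : ℕ × ℕ → ℚ(q) satisfy the initial condition a_{0, m} = 1 / ([m+1]_q)^k for all m ≥ 0 and the recurrence a_{n+1, m} = [m]_q · a_{n, m} − [m+1]_q · a_{n, m+1} for all n, m ≥ 0. Then for every n ≥ 0, a_{n, 0} = (−1)^n · p_{n,k}(q), where p_{n,k}(q) := (−1)^n ∑_{m=0}^{n} (−1)^m · [m]!_q · {n brace m}_q / ([m+1]_q)^k is the q-poly-Bernoulli number; equivalently, a_{n, 0} = ∑_{m=0}^{n} (−1)^m [m]!_q {n brace m}_q / ([m+1]_q)^k. -/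

import Mathlib

open Finset

/-- The q-integer `[n]_q = 1 + q + ⋯ + q^(n-1)`. -/
def qInt {R : Type*} [CommSemiring R] (q : R) (n : ℕ) : R :=
  ∑ i ∈ Finset.range n, q ^ i

/-- The q-factorial `[n]!_q = [1]_q [2]_q ⋯ [n]_q`. -/
def qFact {R : Type*} [CommSemiring R] (q : R) (n : ℕ) : R :=
  ∏ i ∈ Finset.range n, qInt q (i + 1)

/-- The Carlitz q-Stirling numbers of the second kind. -/
def qStirling {R : Type*} [CommSemiring R] (q : R) : ℕ → ℕ → R
  | 0, 0 => 1
  | 0, _ + 1 => 0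
  | _ + 1, 0 => 0
  | n + 1, m + 1 => qStirling q n m + qInt q (m + 1) * qStirling q n (m + 1)

/-- Shifted q-factorial: `[m+j]!_q / [m]!_q`. -/
def qFS {R : Type*} [CommSemiring R] (q : R) (m j : ℕ) : R :=
  ∏ i ∈ Finset.range j, qInt q (m + i + 1)

/-- Shifted q-Stirling array, defined by peeling the *first* step. -/
def qS {R : Type*} [CommSemiring R] (q : R) : ℕ → ℕ → ℕ → R
  | 0, _, 0 => 1
  | 0, _, _ + 1 => 0
  | n + 1, m, 0 => qInt q m * qS q n m 0
  | n + 1, m, j + 1 => qInt q m * qS q n m (j + 1) + qS q n (m + 1) j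

lemma qFS_zero_left {R : Type*} [CommSemiring R] (q : R) (j : ℕ) :
    qFS q 0 j = qFact q j := by
  simp [qFS, qFact]

lemma qFS_succ {R : Type*} [CommSemiring R] (q : R) (m j : ℕ) :
    qFS q m (j + 1) = qInt q (m + 1) * qFS q (m + 1) j := by
  rw [qFS, Finset.prod_range_succ', qFS, mul_comm]
  congr 1
  apply Finset.prod_congr rfl
  intro i _
  congr 1
  omega

lemma qS_zero_of_lt {R : Type*} [CommSemiring R] (q : R) :
    ∀ n m j, n < j → qS q n m j = 0 := by
  intro n
  induction n with
  | zero =>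
    intro m j hj
    match j, hj with
    | j + 1, _ => rfl
  | succ n ih =>
    intro m j hj
    match j, hj with
    | j + 1, hj =>
      show qInt q m * qS q n m (j + 1) + qS q n (m + 1) j = 0
      rw [ih m (j + 1) (by omega), ih (m + 1) j (by omega)]
      ring

/-- The "last step" recurrence for `qS`. -/
lemma qS_rev {R : Type*} [CommRing R] (q : R) :
    ∀ n m j, qS q (n + 1) m (j + 1)
      = qS q n m j + qInt q (m + j + 1) * qS q n m (j + 1) := by
  intro n
  induction n with
  | zero =>
    intro m j
    cases j with
    | zero =>
      show qInt q m * 0 + 1 = 1 + qInt q (m + 0 + 1) * 0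
      ring
    | succ j =>
      show qInt q m * 0 + 0 = 0 + qInt q (m + (j + 1) + 1) * 0
      ring
  | succ n ih =>
    intro m j
    cases j with
    | zero =>
      have e := ih m 0
      simp only [Nat.add_zero, Nat.zero_add] at e ⊢
      have dx : qS q (n + 1) m 1
          = qInt q m * qS q n m 1 + qS q n (m + 1) 0 := rfl
      have dL : qS q (n + 1 + 1) m 1
          = qInt q m * qS q (n + 1) m 1 + qS q (n + 1) (m + 1) 0 := rfl
      have dY : qS q (n + 1) (m + 1) 0 = qInt q (m + 1) * qS q n (m + 1) 0 := rfl
      have dR : qS q (n + 1) m 0 = qInt q m * qS q n m 0 := rfl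
      linear_combination qInt q m * e - qInt q (m + 1) * dx + dL + dY - dR
    | succ j =>
      have e := ih m (j + 1)
      have f := ih (m + 1) j
      have hidx : m + 1 + j + 1 = m + (j + 1) + 1 := by omega
      rw [hidx] at f
      have dx : qS q (n + 1) m (j + 1 + 1)
          = qInt q m * qS q n m (j + 1 + 1) + qS q n (m + 1) (j + 1) := rfl
      have dL : qS q (n + 1 + 1) m (j + 1 + 1)
          = qInt q m * qS q (n + 1) m (j + 1 + 1) + qS q (n + 1) (m + 1) (j + 1) := rfl
      have dR : qS q (n + 1) m (j + 1)
          = qInt q m * qS q n m (j + 1) + qS q n (m + 1) j := rfl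
      linear_combination qInt q m * e + f - qInt q (m + (j + 1) + 1) * dx + dL - dR

lemma qS_zero_eq_qStirling {R : Type*} [CommRing R] (q : R) :
    ∀ n j, qS q n 0 j = qStirling q n j := by
  intro n
  induction n with
  | zero =>
    intro j
    cases j with
    | zero => rfl
    | succ j => rfl
  | succ n ih =>
    intro j
    cases j with
    | zero =>
      show qInt q 0 * qS q n 0 0 = qStirling q (n + 1) 0
      simp [qInt, qStirling]
    | succ j =>
      rw [qS_rev]
      have h0 : (0 : ℕ) + j + 1 = j + 1 := by omega
      rw [h0, ih j, ih (j + 1)]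
      rfl

lemma qAT_key (k : ℤ) (a : ℕ → ℕ → RatFunc ℚ)
    (h0 : ∀ m : ℕ, a 0 m = (qInt (RatFunc.X : RatFunc ℚ) (m + 1) ^ k)⁻¹)
    (hrec : ∀ n m : ℕ,
      a (n + 1) m = qInt (RatFunc.X : RatFunc ℚ) m * a n m
        - qInt (RatFunc.X : RatFunc ℚ) (m + 1) * a n (m + 1)) :
    ∀ n m : ℕ, a n m
      = ∑ j ∈ Finset.range (n + 1),
          (-1 : RatFunc ℚ) ^ j * qFS (RatFunc.X : RatFunc ℚ) m j *
            qS (RatFunc.X : RatFunc ℚ) n m j /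
              qInt (RatFunc.X : RatFunc ℚ) (m + j + 1) ^ k := by
  set X : RatFunc ℚ := RatFunc.X with hX
  intro n
  induction n with
  | zero =>
    intro m
    simp [h0, qS, qFS, one_div]
  | succ n ih =>
    intro m
    rw [hrec n m, ih m, ih (m + 1)]
    rw [Finset.sum_range_succ' _ (n + 1)]
    have hterm : ∀ j ∈ Finset.range (n + 1),
        (-1 : RatFunc ℚ) ^ (j + 1) * qFS X m (j + 1) *
            qS X (n + 1) m (j + 1) / qInt X (m + (j + 1) + 1) ^ k
        = qInt X m * ((-1 : RatFunc ℚ) ^ (j + 1) * qFS X m (j + 1) *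
              qS X n m (j + 1) / qInt X (m + (j + 1) + 1) ^ k)
          - qInt X (m + 1) * ((-1 : RatFunc ℚ) ^ j * qFS X (m + 1) j *
              qS X n (m + 1) j / qInt X (m + 1 + j + 1) ^ k) := by
      intro j _
      have h1 : m + 1 + j + 1 = m + (j + 1) + 1 := by omega
      have dx : qS X (n + 1) m (j + 1)
          = qInt X m * qS X n m (j + 1) + qS X n (m + 1) j := rfl
      rw [h1, dx, qFS_succ, pow_succ]
      ring
    rw [Finset.sum_congr rfl hterm]
    have hGsum : (∑ j ∈ Finset.range (n + 1),
          (-1 : RatFunc ℚ) ^ (j + 1) * qFS X m (j + 1) * qS X n m (j + 1) /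
            qInt X (m + (j + 1) + 1) ^ k)
        = (∑ j ∈ Finset.range (n + 1),
            (-1 : RatFunc ℚ) ^ j * qFS X m j * qS X n m j /
              qInt X (m + j + 1) ^ k)
          - (-1 : RatFunc ℚ) ^ 0 * qFS X m 0 * qS X n m 0 /
              qInt X (m + 0 + 1) ^ k := by
      have h3 := Finset.sum_range_succ'
        (fun j => (-1 : RatFunc ℚ) ^ j * qFS X m j * qS X n m j /
          qInt X (m + j + 1) ^ k) (n + 1)
      have h4 := Finset.sum_range_succ
        (fun j => (-1 : RatFunc ℚ) ^ j * qFS X m j * qS X n m j /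
          qInt X (m + j + 1) ^ k) (n + 1)
      rw [qS_zero_of_lt X n m (n + 1) (by omega)] at h4
      simp only [mul_zero, zero_div, add_zero] at h4
      linear_combination h4 - h3
    rw [Finset.sum_sub_distrib, ← Finset.mul_sum, ← Finset.mul_sum, hGsum]
    have d0 : qS X (n + 1) m 0 = qInt X m * qS X n m 0 := rfl
    rw [d0]
    ring

/-- The q-Akiyama–Tanigawa algorithm (variant B) with initial row `a_{0,m} = 1/[m+1]_q^k`
produces the q-poly-Bernoulli numbers:
`a_{n,0} = ∑_{m=0}^n (-1)^m [m]!_q {n brace m}_q / [m+1]_q^k = (-1)^n p_{n,k}(q)`. -/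
theorem qAkiyamaTanigawa_polyBernoulli (k : ℤ) (a : ℕ → ℕ → RatFunc ℚ)
    (h0 : ∀ m : ℕ, a 0 m = (qInt (RatFunc.X : RatFunc ℚ) (m + 1) ^ k)⁻¹)
    (hrec : ∀ n m : ℕ,
      a (n + 1) m = qInt (RatFunc.X : RatFunc ℚ) m * a n m
        - qInt (RatFunc.X : RatFunc ℚ) (m + 1) * a n (m + 1)) :
    ∀ n : ℕ, a n 0
      = ∑ m ∈ Finset.range (n + 1),
          (-1 : RatFunc ℚ) ^ m * qFact (RatFunc.X : RatFunc ℚ) m *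
            qStirling (RatFunc.X : RatFunc ℚ) n m /
              qInt (RatFunc.X : RatFunc ℚ) (m + 1) ^ k := by
  intro n
  rw [qAT_key k a h0 hrec n 0]
  apply Finset.sum_congr rfl
  intro j _
  rw [qFS_zero_left, qS_zero_eq_qStirling]
  norm_num
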